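/- Let $h:(a,b)\to(0,\infty)$ be continuous and $\tau_0\in(a,b)$. Suppose $h^k:(a,b)\to(0,\infty)$ is a sequence of continuous functions converging to $h$ uniformly on compact subsets of $(a,b)$, that $\int_{\tau_0}^b h=\infty$, and let $l>0$. Define $t^k$ (when it exists) by $\int_{\tau_0}^{t^k}h^k=l$ and $t^\infty$ by $\int_{\tau_0}^{t^\infty}h=l$. Then $t^\infty\in(\tau_0,b)$ exists and is unique, $t^k$ exists for all large $k$, and $t^k\to t^\infty$. -/
import Mathlib


open MeasureTheory Set Filter

private lemma aux_intble {a b τ0 : ℝ} (ha : a < τ0) {g : ℝ → ℝ}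
    (gc : ContinuousOn g (Ioo a b)) {s t : ℝ} (hs : s ∈ Ico τ0 b) (ht : t ∈ Ico τ0 b) :
    IntervalIntegrable g volume s t := by
  apply ContinuousOn.intervalIntegrable
  apply gc.mono
  intro x hx
  rw [Set.uIcc, Set.mem_Icc] at hx
  exact ⟨lt_of_lt_of_le ha (le_trans (le_inf hs.1 ht.1) hx.1),
    lt_of_le_of_lt hx.2 (sup_lt_iff.mpr ⟨hs.2, ht.2⟩)⟩

private lemma aux_mono {a b τ0 : ℝ} (ha : a < τ0) (hb : τ0 < b) {g : ℝ → ℝ}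
    (gc : ContinuousOn g (Ioo a b)) (gp : ∀ τ ∈ Ioo a b, 0 < g τ) :
    StrictMonoOn (fun t => ∫ τ in τ0..t, g τ) (Ico τ0 b) := by
  intro s hs t ht hst
  have h1 := intervalIntegral.integral_add_adjacent_intervals
    (aux_intble ha gc ⟨le_rfl, hb⟩ hs) (aux_intble ha gc hs ht)
  have hpos : 0 < ∫ τ in s..t, g τ :=
    intervalIntegral.intervalIntegral_pos_of_pos_on (aux_intble ha gc hs ht)
      (fun x hx => gp x ⟨ha.trans_le (hs.1.trans hx.1.le), hx.2.trans ht.2⟩) hst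
  dsimp only
  linarith

private lemma aux_cont {a b τ0 t1 : ℝ} (ha : a < τ0) (hτ : τ0 ≤ t1) (hb : t1 < b)
    {g : ℝ → ℝ} (gc : ContinuousOn g (Ioo a b)) :
    ContinuousOn (fun t => ∫ τ in τ0..t, g τ) (Icc τ0 t1) := by
  have hint : IntegrableOn g (uIcc τ0 t1) volume := by
    rw [uIcc_of_le hτ]
    exact (gc.mono (Icc_subset_Ioo ha hb)).integrableOn_compact isCompact_Icc
  have := intervalIntegral.continuousOn_primitive_interval hint
  rwa [uIcc_of_le hτ] at this

private lemma aux_bound {a b τ0 t1 δ : ℝ} (ha : a < τ0) (hτ : τ0 ≤ t1) (ht1 : t1 < b)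
    {g1 g2 : ℝ → ℝ} (g1c : ContinuousOn g1 (Ioo a b)) (g2c : ContinuousOn g2 (Ioo a b))
    (hδ : 0 ≤ δ) (hd : ∀ x ∈ Icc τ0 t1, |g1 x - g2 x| ≤ δ) {t : ℝ} (htm : t ∈ Icc τ0 t1) :
    |(∫ τ in τ0..t, g1 τ) - ∫ τ in τ0..t, g2 τ| ≤ δ * (t1 - τ0) := by
  have htI : t ∈ Ico τ0 b := ⟨htm.1, htm.2.trans_lt ht1⟩
  have hτI : τ0 ∈ Ico τ0 b := ⟨le_rfl, hτ.trans_lt ht1⟩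
  rw [← intervalIntegral.integral_sub (aux_intble ha g1c hτI htI) (aux_intble ha g2c hτI htI)]
  have hnorm : ‖∫ τ in τ0..t, (g1 τ - g2 τ)‖ ≤ δ * |t - τ0| := by
    apply intervalIntegral.norm_integral_le_of_norm_le_const
    intro x hx
    rw [uIoc_of_le htm.1] at hx
    rw [Real.norm_eq_abs]
    exact hd x ⟨hx.1.le, hx.2.trans htm.2⟩
  rw [Real.norm_eq_abs] at hnorm
  calc |∫ τ in τ0..t, (g1 τ - g2 τ)| ≤ δ * |t - τ0| := hnorm
    _ ≤ δ * (t1 - τ0) := by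
        rw [abs_of_nonneg (by linarith [htm.1])]
        exact mul_le_mul_of_nonneg_left (by linarith [htm.2]) hδ

theorem stmt_17 (a b : ℝ) (τ0 : ℝ) (hτ0 : τ0 ∈ Ioo a b)
    (h : ℝ → ℝ) (hk : ℕ → ℝ → ℝ)
    (hc : ContinuousOn h (Ioo a b)) (hp : ∀ τ ∈ Ioo a b, 0 < h τ)
    (hkc : ∀ k, ContinuousOn (hk k) (Ioo a b))
    (hkp : ∀ k, ∀ τ ∈ Ioo a b, 0 < hk k τ)
    (hunif : ∀ K ⊆ Ioo a b, IsCompact K → TendstoUniformlyOn hk h atTop K)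
    (hdiv : ∫⁻ τ in Ioo τ0 b, ENNReal.ofReal (h τ) = ⊤)
    (l : ℝ) (hl : 0 < l) :
    ∃ tinf ∈ Ioo τ0 b,
      (∫ τ in τ0..tinf, h τ) = l ∧
      (∀ t', t' ∈ Ioo τ0 b → (∫ τ in τ0..t', h τ) = l → t' = tinf) ∧
      ∃ tk : ℕ → ℝ,
        (∀ᶠ k in atTop, tk k ∈ Ioo τ0 b ∧ (∫ τ in τ0..tk k, hk k τ) = l) ∧
        Tendsto tk atTop (nhds tinf) := by
  classical
  obtain ⟨haτ, hτb⟩ := hτ0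
  -- Step 1: find t1 ∈ (τ0, b) with l < ∫ τ0..t1 h
  have hcov : AECover (volume.restrict (Ioo τ0 b)) (nhdsWithin b (Iio b))
      (fun t => Ioc τ0 t) := by
    constructor
    · apply ae_restrict_of_forall_mem measurableSet_Ioo
      intro x hx
      filter_upwards [Ioo_mem_nhdsLT_of_mem ⟨hx.2, le_rfl⟩] with t htt
      exact ⟨hx.1, htt.1.le⟩
    · exact fun _ => measurableSet_Ioc
  have hfm : AEMeasurable (fun x => ENNReal.ofReal (h x)) (volume.restrict (Ioo τ0 b)) := by
    have : AEMeasurable h (volume.restrict (Ioo a b)) := hc.aemeasurable measurableSet_Ioo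
    exact (ENNReal.measurable_ofReal.comp_aemeasurable
      (this.mono_measure (Measure.restrict_mono (Ioo_subset_Ioo haτ.le le_rfl) le_rfl)))
  have htend := hcov.lintegral_tendsto_of_countably_generated hfm
  rw [hdiv] at htend
  have hev1 := (tendsto_order.1 htend).1 (ENNReal.ofReal l) ENNReal.ofReal_lt_top
  have hev2 : ∀ᶠ t in nhdsWithin b (Iio b), t ∈ Ioo τ0 b :=
    eventually_of_mem (Ioo_mem_nhdsLT_of_mem ⟨hτb, le_rfl⟩) fun t ht => ht
  obtain ⟨t1, hlt, ht1⟩ := (hev1.and hev2).exists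
  have hsub1 : Ioc τ0 t1 ⊆ Ioo τ0 b := fun x hx => ⟨hx.1, lt_of_le_of_lt hx.2 ht1.2⟩
  rw [Measure.restrict_restrict measurableSet_Ioc, inter_eq_left.mpr hsub1] at hlt
  have hIccsub : Icc τ0 t1 ⊆ Ioo a b := Icc_subset_Ioo haτ ht1.2
  have hkey : ENNReal.ofReal (∫ τ in τ0..t1, h τ)
      = ∫⁻ x in Ioc τ0 t1, ENNReal.ofReal (h x) := by
    rw [intervalIntegral.integral_of_le ht1.1.le]
    apply ofReal_integral_eq_lintegral_ofReal
    · exact ((hc.mono hIccsub).integrableOn_compact isCompact_Icc).mono_set Ioc_subset_Icc_self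
    · exact (ae_restrict_iff' measurableSet_Ioc).2 (ae_of_all _ fun x hx =>
        (hp x ⟨haτ.trans hx.1, hx.2.trans_lt ht1.2⟩).le)
  have hFt1 : l < ∫ τ in τ0..t1, h τ := by
    by_contra hle
    push_neg at hle
    rw [← hkey] at hlt
    exact absurd (ENNReal.ofReal_le_ofReal hle) (not_le.mpr hlt)
  -- Step 2: IVT for h
  have hF0 : (∫ τ in τ0..τ0, h τ) = 0 := intervalIntegral.integral_same
  have hcF := aux_cont haτ ht1.1.le ht1.2 hc
  obtain ⟨tinf, htinfm, hFtinf⟩ := intermediate_value_Ioo ht1.1.le hcF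
    (show l ∈ Ioo (∫ τ in τ0..τ0, h τ) (∫ τ in τ0..t1, h τ) by rw [hF0]; exact ⟨hl, hFt1⟩)
  have htinf : tinf ∈ Ioo τ0 b := ⟨htinfm.1, htinfm.2.trans ht1.2⟩
  have hFtinf : (∫ τ in τ0..tinf, h τ) = l := hFtinf
  have hm := aux_mono haτ hτb hc hp
  refine ⟨tinf, htinf, hFtinf, ?_, ?_⟩
  · intro t' ht' hFt'
    exact hm.injOn (Ioo_subset_Ico_self ht') (Ioo_subset_Ico_self htinf)
      (by rw [hFt', hFtinf])
  -- Step 3: the sequence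
  set P : ℕ → Prop := fun k => ∃ t ∈ Ioo τ0 b, (∫ τ in τ0..t, hk k τ) = l with hP
  refine ⟨fun k => if hPk : P k then hPk.choose else τ0, ?_, ?_⟩
  · -- eventual existence
    have hu := Metric.tendstoUniformlyOn_iff.mp (hunif _ hIccsub isCompact_Icc)
    set ε0 := ((∫ τ in τ0..t1, h τ) - l) / (t1 - τ0 + 1) with hε0
    have hε0pos : 0 < ε0 := by
      apply div_pos (by linarith) (by linarith [ht1.1])
    filter_upwards [hu ε0 hε0pos] with k hkk
    have hex : P k := by
      have hbd : ∀ x ∈ Icc τ0 t1, |hk k x - h x| ≤ ε0 := fun x hx => by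
        rw [abs_sub_comm, ← Real.dist_eq]; exact (hkk x hx).le
      have h1 := aux_bound haτ ht1.1.le ht1.2 (hkc k) hc hε0pos.le hbd
        (t := t1) ⟨ht1.1.le, le_rfl⟩
      have h2 : ε0 * (t1 - τ0) < (∫ τ in τ0..t1, h τ) - l := by
        rw [hε0, div_mul_eq_mul_div, div_lt_iff₀ (by linarith [ht1.1])]
        nlinarith [ht1.1, hFt1]
      have hFk : l < ∫ τ in τ0..t1, hk k τ := by
        have h3 := abs_le.mp h1
        linarith [h3.1]
      have h0k : (∫ τ in τ0..τ0, hk k τ) = 0 := intervalIntegral.integral_same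
      obtain ⟨s, hs, hss⟩ := intermediate_value_Ioo ht1.1.le
        (aux_cont haτ ht1.1.le ht1.2 (hkc k))
        (show l ∈ Ioo (∫ τ in τ0..τ0, hk k τ) (∫ τ in τ0..t1, hk k τ) by
          rw [h0k]; exact ⟨hl, hFk⟩)
      exact ⟨s, ⟨hs.1, hs.2.trans ht1.2⟩, hss⟩
    rw [dif_pos hex]
    exact hex.choose_spec
  · -- convergence
    rw [Metric.tendsto_atTop]
    intro ε hε
    set ε' := min ε (min ((tinf - τ0) / 2) ((b - tinf) / 2)) with hε'
    have hε'pos : 0 < ε' :=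
      lt_min hε (lt_min (by linarith [htinf.1]) (by linarith [htinf.2]))
    have hε'1 : ε' ≤ (tinf - τ0) / 2 := le_trans (min_le_right _ _) (min_le_left _ _)
    have hε'2 : ε' ≤ (b - tinf) / 2 := le_trans (min_le_right _ _) (min_le_right _ _)
    set s1 := tinf - ε' with hs1def
    set s2 := tinf + ε' with hs2def
    have hτs1 : τ0 < s1 := by rw [hs1def]; linarith [htinf.1]
    have hs2b : s2 < b := by rw [hs2def]; linarith [htinf.2]
    have hs1I : s1 ∈ Ico τ0 b := ⟨hτs1.le, by rw [hs1def]; linarith [htinf.2, hε'pos]⟩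
    have hs2I : s2 ∈ Ico τ0 b := ⟨by rw [hs2def]; linarith [htinf.1, hε'pos], hs2b⟩
    have htinfI : tinf ∈ Ico τ0 b := Ioo_subset_Ico_self htinf
    have hFs1 : (∫ τ in τ0..s1, h τ) < l := by
      have := hm hs1I htinfI (by rw [hs1def]; linarith)
      dsimp only at this; rw [hFtinf] at this; exact this
    have hFs2 : l < ∫ τ in τ0..s2, h τ := by
      have := hm htinfI hs2I (by rw [hs2def]; linarith)
      dsimp only at this; rw [hFtinf] at this; exact this
    have hK2 : Icc τ0 s2 ⊆ Ioo a b := Icc_subset_Ioo haτ hs2b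
    have hu2 := Metric.tendstoUniformlyOn_iff.mp (hunif _ hK2 isCompact_Icc)
    set ε1 := min (l - (∫ τ in τ0..s1, h τ)) ((∫ τ in τ0..s2, h τ) - l) / (s2 - τ0 + 1)
      with hε1
    have hminpos : 0 < min (l - (∫ τ in τ0..s1, h τ)) ((∫ τ in τ0..s2, h τ) - l) :=
      lt_min (by linarith) (by linarith)
    have hε1pos : 0 < ε1 := div_pos hminpos (by linarith [hs2I.1])
    -- eventual existence again (reuse)
    have hu := Metric.tendstoUniformlyOn_iff.mp (hunif _ hIccsub isCompact_Icc)
    set ε0 := ((∫ τ in τ0..t1, h τ) - l) / (t1 - τ0 + 1) with hε0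
    have hε0pos : 0 < ε0 := div_pos (by linarith) (by linarith [ht1.1])
    have hfinal : ∀ᶠ k in atTop,
        dist (if hPk : P k then hPk.choose else τ0) tinf < ε := by
      filter_upwards [hu ε0 hε0pos, hu2 ε1 hε1pos] with k hkk hkk2
      -- existence of solution
      have hex : P k := by
        have hbd : ∀ x ∈ Icc τ0 t1, |hk k x - h x| ≤ ε0 := fun x hx => by
          rw [abs_sub_comm, ← Real.dist_eq]; exact (hkk x hx).le
        have h1 := aux_bound haτ ht1.1.le ht1.2 (hkc k) hc hε0pos.le hbd
          (t := t1) ⟨ht1.1.le, le_rfl⟩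
        have h2 : ε0 * (t1 - τ0) < (∫ τ in τ0..t1, h τ) - l := by
          rw [hε0, div_mul_eq_mul_div, div_lt_iff₀ (by linarith [ht1.1])]
          nlinarith [ht1.1, hFt1]
        have hFk : l < ∫ τ in τ0..t1, hk k τ := by
          have h3 := abs_le.mp h1
          linarith [h3.1]
        have h0k : (∫ τ in τ0..τ0, hk k τ) = 0 := intervalIntegral.integral_same
        obtain ⟨s, hs, hss⟩ := intermediate_value_Ioo ht1.1.le
          (aux_cont haτ ht1.1.le ht1.2 (hkc k))
          (show l ∈ Ioo (∫ τ in τ0..τ0, hk k τ) (∫ τ in τ0..t1, hk k τ) by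
            rw [h0k]; exact ⟨hl, hFk⟩)
        exact ⟨s, ⟨hs.1, hs.2.trans ht1.2⟩, hss⟩
      rw [dif_pos hex]
      obtain ⟨htkm, htkl⟩ := hex.choose_spec
      set tkk := hex.choose with htkk
      -- bounds at s1 and s2
      have hbd2 : ∀ x ∈ Icc τ0 s2, |hk k x - h x| ≤ ε1 := fun x hx => by
        rw [abs_sub_comm, ← Real.dist_eq]; exact (hkk2 x hx).le
      have hb1 := aux_bound haτ hs2I.1 hs2b (hkc k) hc hε1pos.le hbd2
        (t := s1) ⟨hτs1.le, by rw [hs1def, hs2def]; linarith [hε'pos]⟩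
      have hb2 := aux_bound haτ hs2I.1 hs2b (hkc k) hc hε1pos.le hbd2
        (t := s2) ⟨hs2I.1, le_rfl⟩
      have hsmall : ε1 * (s2 - τ0)
          < min (l - (∫ τ in τ0..s1, h τ)) ((∫ τ in τ0..s2, h τ) - l) := by
        rw [hε1, div_mul_eq_mul_div, div_lt_iff₀ (by linarith [hs2I.1])]
        nlinarith [hs2I.1, hminpos]
      have hmin1 := min_le_left (l - (∫ τ in τ0..s1, h τ)) ((∫ τ in τ0..s2, h τ) - l)
      have hmin2 := min_le_right (l - (∫ τ in τ0..s1, h τ)) ((∫ τ in τ0..s2, h τ) - l)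
      have hFks1 : (∫ τ in τ0..s1, hk k τ) < l := by
        have h3 := abs_le.mp hb1
        linarith [h3.2]
      have hFks2 : l < ∫ τ in τ0..s2, hk k τ := by
        have h3 := abs_le.mp hb2
        linarith [h3.1]
      have hmk := aux_mono haτ hτb (hkc k) (hkp k)
      have htkI : tkk ∈ Ico τ0 b := Ioo_subset_Ico_self htkm
      have hlow : s1 < tkk := by
        by_contra hcon
        push_neg at hcon
        have h5 : (∫ τ in τ0..tkk, hk k τ) ≤ ∫ τ in τ0..s1, hk k τ :=
          hmk.monotoneOn htkI hs1I hcon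
        rw [htkl] at h5
        linarith
      have hhigh : tkk < s2 := by
        by_contra hcon
        push_neg at hcon
        have h5 : (∫ τ in τ0..s2, hk k τ) ≤ ∫ τ in τ0..tkk, hk k τ :=
          hmk.monotoneOn hs2I htkI hcon
        rw [htkl] at h5
        linarith
      rw [Real.dist_eq, abs_sub_lt_iff]
      have hε'ε : ε' ≤ ε := min_le_left _ _
      rw [hs1def] at hlow
      rw [hs2def] at hhigh
      exact ⟨by linarith, by linarith⟩
    rw [eventually_atTop] at hfinal
    obtain ⟨N, hN⟩ := hfinal
    exact ⟨N, hN⟩
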